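/- Soundness of the calculus LHS⁻: every formula φ of L⁻ that is derivable in the Hilbert system LHS⁻ is valid in all LHS models (under the two-dimensional semantics evaluating formulas at pairs of states). -/
import Mathlib


inductive LHSForm : Type
  | pl : ℕ → LHSForm
  | pr : ℕ → LHSForm
  | I : LHSForm
  | neg : LHSForm → LHSForm
  | and : LHSForm → LHSForm → LHSForm
  | box : LHSForm → LHSForm
  | bbox : LHSForm → LHSForm
  deriving DecidableEq

def LHSForm.or (φ ψ : LHSForm) : LHSForm := .neg (.and φ.neg ψ.neg)
def LHSForm.imp (φ ψ : LHSForm) : LHSForm := .neg (.and φ ψ.neg)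
def LHSForm.iff (φ ψ : LHSForm) : LHSForm := .and (φ.imp ψ) (ψ.imp φ)
def LHSForm.dia (φ : LHSForm) : LHSForm := .neg (.box φ.neg)
def LHSForm.bdia (φ : LHSForm) : LHSForm := .neg (.bbox φ.neg)

structure LHSModel where
  W : Type
  R : W → W → Prop
  Vl : ℕ → W → Prop
  Vr : ℕ → W → Prop

def LHSModel.sat (M : LHSModel) : M.W → M.W → LHSForm → Prop
  | s, _, .pl i => M.Vl i s
  | _, t, .pr i => M.Vr i t
  | s, t, .I => s = t
  | s, t, .neg φ => ¬ M.sat s t φ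
  | s, t, .and φ ψ => M.sat s t φ ∧ M.sat s t ψ
  | s, t, .box φ => ∀ s', M.R s s' → M.sat s' t φ
  | s, t, .bbox φ => ∀ t', M.R t t' → M.sat s t' φ

/-- The left fragment L_□: only left variables, ¬, ∧, □. -/
inductive IsLeft : LHSForm → Prop
  | pl (i : ℕ) : IsLeft (.pl i)
  | neg {φ} : IsLeft φ → IsLeft φ.neg
  | and {φ ψ} : IsLeft φ → IsLeft ψ → IsLeft (φ.and ψ)
  | box {φ} : IsLeft φ → IsLeft φ.box

/-- The right fragment L_■: only right variables, ¬, ∧, ■. -/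
inductive IsRight : LHSForm → Prop
  | pr (i : ℕ) : IsRight (.pr i)
  | neg {φ} : IsRight φ → IsRight φ.neg
  | and {φ ψ} : IsRight φ → IsRight ψ → IsRight (φ.and ψ)
  | bbox {φ} : IsRight φ → IsRight φ.bbox

/-- Formulas of L⁻: no occurrence of the constant I. -/
inductive NoI : LHSForm → Prop
  | pl (i : ℕ) : NoI (.pl i)
  | pr (i : ℕ) : NoI (.pr i)
  | neg {φ} : NoI φ → NoI φ.neg
  | and {φ ψ} : NoI φ → NoI ψ → NoI (φ.and ψ)
  | box {φ} : NoI φ → NoI φ.box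
  | bbox {φ} : NoI φ → NoI φ.bbox

/-- One-dimensional Kripke satisfaction (□ and ■ both read as the box). -/
def LHSModel.sat1 (M : LHSModel) : M.W → LHSForm → Prop
  | w, .pl i => M.Vl i w
  | w, .pr i => M.Vr i w
  | _, .I => True
  | w, .neg φ => ¬ M.sat1 w φ
  | w, .and φ ψ => M.sat1 w φ ∧ M.sat1 w ψ
  | w, .box φ => ∀ v, M.R w v → M.sat1 v φ
  | w, .bbox φ => ∀ v, M.R w v → M.sat1 v φ

/-- Conjunction of a list of formulas (a tautology for the empty list). -/
def conjList : List LHSForm → LHSForm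
  | [] => (LHSForm.pl 0).imp (.pl 0)
  | [φ] => φ
  | φ :: ψ :: rest => φ.and (conjList (ψ :: rest))

/-- Disjunction of a list of formulas (a contradiction for the empty list). -/
def disjList : List LHSForm → LHSForm
  | [] => (LHSForm.pl 0).and (LHSForm.pl 0).neg
  | [φ] => φ
  | φ :: ψ :: rest => φ.or (disjList (ψ :: rest))


/-- Simultaneous substitution of left variables by `σl` and right variables by `σr`. -/
def LHSForm.subst (σl σr : ℕ → LHSForm) : LHSForm → LHSForm
  | .pl i => σl i
  | .pr i => σr i
  | .I => .I
  | .neg φ => (φ.subst σl σr).neg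
  | .and φ ψ => (φ.subst σl σr).and (ψ.subst σl σr)
  | .box φ => (φ.subst σl σr).box
  | .bbox φ => (φ.subst σl σr).bbox

/-- Atomic propositional variables. -/
def IsVarAtom (φ : LHSForm) : Prop := ∃ i, φ = .pl i ∨ φ = .pr i

/-- The Hilbert calculus LHS⁻. -/
inductive LHSProof : LHSForm → Prop
  | a1 {p q : LHSForm} : IsVarAtom p → IsVarAtom q → LHSProof (p.imp (q.imp p))
  | a2 {p q r : LHSForm} : IsVarAtom p → IsVarAtom q → IsVarAtom r →
      LHSProof ((p.imp (q.imp r)).imp ((p.imp q).imp (p.imp r)))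
  | a3 {p q : LHSForm} : IsVarAtom p → IsVarAtom q →
      LHSProof ((p.neg.imp q.neg).imp (q.imp p))
  | kbox (i j : ℕ) :
      LHSProof ((((LHSForm.pl i).imp (.pl j)).box).imp
        (((LHSForm.pl i).box).imp ((LHSForm.pl j).box)))
  | kbbox (i j : ℕ) :
      LHSProof ((((LHSForm.pr i).imp (.pr j)).bbox).imp
        (((LHSForm.pr i).bbox).imp ((LHSForm.pr j).bbox)))
  | rbox (i j : ℕ) :
      LHSProof ((((LHSForm.pl i).or (.pr j)).box).iff (((LHSForm.pl i).box).or (.pr j)))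
  | rbbox (i j : ℕ) :
      LHSProof ((((LHSForm.pl i).or (.pr j)).bbox).iff ((LHSForm.pl i).or ((LHSForm.pr j).bbox)))
  | sub {α : LHSForm} (σl σr : ℕ → LHSForm) : LHSProof α →
      (∀ i, IsLeft (σl i)) → (∀ i, IsRight (σr i)) → LHSProof (α.subst σl σr)
  | mp {α β : LHSForm} : LHSProof (α.imp β) → LHSProof α → LHSProof β
  | nec {α : LHSForm} : LHSProof α → LHSProof α.box
  | necb {α : LHSForm} : LHSProof α → LHSProof α.bbox

/-- φ is a clean CNF formula of the form ⋀ᵢ (ψᵢ ∨ γᵢ) with ψᵢ ∈ L_□, γᵢ ∈ L_■. -/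
def IsCleanCNF (φ : LHSForm) : Prop :=
  ∃ l : List (LHSForm × LHSForm), l ≠ [] ∧
    (∀ p ∈ l, IsLeft p.1 ∧ IsRight p.2) ∧
    φ = conjList (l.map fun p => p.1.or p.2)

/-- Purely propositional formulas (atoms, ¬, ∧). -/
inductive IsProp : LHSForm → Prop
  | pl (i : ℕ) : IsProp (.pl i)
  | pr (i : ℕ) : IsProp (.pr i)
  | neg {φ} : IsProp φ → IsProp φ.neg
  | and {φ ψ} : IsProp φ → IsProp ψ → IsProp (φ.and ψ)

/-- Clean formulas: substitution instances of propositional formulas by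
formulas of L_□ (for left variables) and of L_■ (for right variables). -/
def IsClean (φ : LHSForm) : Prop :=
  ∃ (α : LHSForm) (σl σr : ℕ → LHSForm), IsProp α ∧
    (∀ i, IsLeft (σl i)) ∧ (∀ i, IsRight (σr i)) ∧ φ = α.subst σl σr

lemma left_indep {φ : LHSForm} (h : IsLeft φ) (M : LHSModel) :
    ∀ (s t t' : M.W), M.sat s t φ ↔ M.sat s t' φ := by
  induction h with
  | pl i => intro s t t'; rfl
  | neg _ ih => intro s t t'; simp [LHSModel.sat, ih s t t']
  | and _ _ ih1 ih2 => intro s t t'; simp [LHSModel.sat, ih1 s t t', ih2 s t t']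
  | box _ ih =>
      intro s t t'
      simp only [LHSModel.sat]
      exact forall_congr' fun s' => imp_congr Iff.rfl (ih s' t t')

lemma right_indep {φ : LHSForm} (h : IsRight φ) (M : LHSModel) :
    ∀ (s s' t : M.W), M.sat s t φ ↔ M.sat s' t φ := by
  induction h with
  | pr i => intro s s' t; rfl
  | neg _ ih => intro s s' t; simp [LHSModel.sat, ih s s' t]
  | and _ _ ih1 ih2 => intro s s' t; simp [LHSModel.sat, ih1 s s' t, ih2 s s' t]
  | bbox _ ih =>
      intro s s' t
      simp only [LHSModel.sat]
      exact forall_congr' fun t' => imp_congr Iff.rfl (ih s s' t')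

lemma subst_sat (M : LHSModel) (σl σr : ℕ → LHSForm)
    (hl : ∀ i, IsLeft (σl i)) (hr : ∀ i, IsRight (σr i)) (s0 t0 : M.W) :
    ∀ (α : LHSForm) (s t : M.W),
      (LHSModel.mk M.W M.R (fun i w => M.sat w t0 (σl i)) (fun i w => M.sat s0 w (σr i))).sat
        s t α ↔ M.sat s t (α.subst σl σr) := by
  intro α
  induction α with
  | pl i => intro s t; simpa [LHSModel.sat, LHSForm.subst] using (left_indep (hl i) M s t0 t)
  | pr i => intro s t; simpa [LHSModel.sat, LHSForm.subst] using (right_indep (hr i) M s0 s t)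
  | I => intro s t; rfl
  | neg φ ih => intro s t; simp [LHSModel.sat, LHSForm.subst, ih]
  | and φ ψ ih1 ih2 => intro s t; simp [LHSModel.sat, LHSForm.subst, ih1, ih2]
  | box φ ih => intro s t; simp [LHSModel.sat, LHSForm.subst, ih]
  | bbox φ ih => intro s t; simp [LHSModel.sat, LHSForm.subst, ih]

/-- Soundness of the calculus LHS⁻: every formula of L⁻ derivable in the
Hilbert system LHS⁻ is valid in all LHS models under the two-dimensional
semantics. -/
theorem LHSminus_soundness (φ : LHSForm) (hI : NoI φ) (h : LHSProof φ) :
    ∀ (M : LHSModel) (s t : M.W), M.sat s t φ := by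
  clear hI
  induction h with
  | a1 _ _ => intro M s t; simp [LHSForm.imp, LHSModel.sat]; tauto
  | a2 _ _ _ => intro M s t; simp [LHSForm.imp, LHSModel.sat]; tauto
  | a3 _ _ => intro M s t; simp [LHSForm.imp, LHSModel.sat]; tauto
  | kbox i j =>
      intro M s t
      simp [LHSForm.imp, LHSModel.sat]
      intro h1 h2
      intro s' hs'
      exact (h1 s' hs') (h2 s' hs')
  | kbbox i j =>
      intro M s t
      simp [LHSForm.imp, LHSModel.sat]
      intro h1 h2
      intro t' ht'
      exact (h1 t' ht') (h2 t' ht')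
  | rbox i j =>
      intro M s t
      simp only [LHSForm.iff, LHSForm.imp, LHSForm.or, LHSModel.sat]
      constructor
      · by_cases hj : M.Vr j t <;> simp [hj] <;> tauto
      · by_cases hj : M.Vr j t <;> simp [hj] <;> tauto
  | rbbox i j =>
      intro M s t
      simp only [LHSForm.iff, LHSForm.imp, LHSForm.or, LHSModel.sat]
      constructor
      · by_cases hi : M.Vl i s <;> simp [hi] <;> tauto
      · by_cases hi : M.Vl i s <;> simp [hi] <;> tauto
  | sub σl σr _ hlft hrgt ih =>
      intro M s t
      exact (subst_sat M σl σr hlft hrgt s t _ s t).mp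
        (ih (LHSModel.mk M.W M.R (fun i w => M.sat w t (σl i))
          (fun i w => M.sat s w (σr i)) ) s t)
  | mp _ _ ih1 ih2 =>
      intro M s t
      have := ih1 M s t
      simp [LHSForm.imp, LHSModel.sat] at this
      tauto
  | nec _ ih => intro M s t s' _; exact ih M s' t
  | necb _ ih => intro M s t t' _; exact ih M s t'
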